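/- In dimension d ≥ 2, the generator S = (1/(4(d−1))) Σ_{‖x−z‖=1} Σ_{i,j} (X^{i,j}_{x,z})² applied to a single momentum coordinate satisfies S p_x = 2 Δ p_x, where Δ is the discrete Laplacian on ℤ^d acting componentwise. -/
import Mathlib


open scoped BigOperators

/-- Canonical basis vector `e j` of `ℤ^d`. -/
def latE (d : ℕ) (j : Fin d) : Fin d → ℤ := fun i => if i = j then 1 else 0

/-- Directional derivative of a function `F` on configuration space
`(ℝ^d)^{ℤ^d}` along the (finitely supported) direction `v`, at `p`. -/
noncomputable def dirDeriv {d : ℕ} (F : ((Fin d → ℤ) → Fin d → ℝ) → ℝ)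
    (v p : (Fin d → ℤ) → Fin d → ℝ) : ℝ :=
  deriv (fun t : ℝ => F (fun y k => p y k + t * v y k)) 0

/-- The tangent vector corresponding to the vector field
`X^{i,j}_{x,z} = (p_z^j − p_x^j)(∂_{p_z^i} − ∂_{p_x^i}) − (p_z^i − p_x^i)(∂_{p_z^j} − ∂_{p_x^j})`. -/
def Xvec {d : ℕ} (i j : Fin d) (x z : Fin d → ℤ)
    (p : (Fin d → ℤ) → Fin d → ℝ) : (Fin d → ℤ) → Fin d → ℝ :=
  fun y k =>
    (if y = z ∧ k = i then p z j - p x j else 0)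
    - (if y = x ∧ k = i then p z j - p x j else 0)
    - (if y = z ∧ k = j then p z i - p x i else 0)
    + (if y = x ∧ k = j then p z i - p x i else 0)

/-- Action of `X^{i,j}_{x,z}` on a function of the configuration. -/
noncomputable def Xop {d : ℕ} (i j : Fin d) (x z : Fin d → ℤ)
    (F : ((Fin d → ℤ) → Fin d → ℝ) → ℝ) (p : (Fin d → ℤ) → Fin d → ℝ) : ℝ :=
  dirDeriv F (Xvec i j x z p) p

/-- The generator `S = (1/(2(d−1))) Σ_x Σ_{i,j,k} (X^{i,j}_{x,x+e_k})²`
(equivalently `(1/(4(d−1))) Σ_{‖x−z‖=1} Σ_{i,j} (X^{i,j}_{x,z})²`), for `d ≥ 2`. -/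
noncomputable def Sgen {d : ℕ} (F : ((Fin d → ℤ) → Fin d → ℝ) → ℝ)
    (p : (Fin d → ℤ) → Fin d → ℝ) : ℝ :=
  (1 / (2 * ((d : ℝ) - 1))) *
    ∑' x : Fin d → ℤ, ∑ i : Fin d, ∑ j : Fin d, ∑ k : Fin d,
      Xop i j x (x + latE d k) (Xop i j x (x + latE d k) F) p

set_option maxHeartbeats 1000000

lemma latE_inj {d : ℕ} {k k' : Fin d} (h : latE d k = latE d k') : k = k' := by
  by_contra hne
  have := congrFun h k
  simp [latE, hne] at this

lemma add_latE_ne {d : ℕ} (x : Fin d → ℤ) (k : Fin d) : x + latE d k ≠ x := by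
  intro h
  have := congrFun h k
  simp [latE, Pi.add_apply] at this

lemma Xvec_lin {d : ℕ} (i j : Fin d) (x z : Fin d → ℤ)
    (p v : (Fin d → ℤ) → Fin d → ℝ) (t : ℝ) :
    Xvec i j x z (fun y k => p y k + t * v y k)
      = fun y k => Xvec i j x z p y k + t * Xvec i j x z v y k := by
  funext y k
  simp only [Xvec]
  split_ifs <;> ring

lemma Xvec_diff {d : ℕ} (i j : Fin d) (x z : Fin d → ℤ)
    (p : (Fin d → ℤ) → Fin d → ℝ) (hzx : z ≠ x) (a : Fin d) :
    Xvec i j x z p z a - Xvec i j x z p x a =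
      2 * ((if a = i then p z j - p x j else 0) - (if a = j then p z i - p x i else 0)) := by
  simp only [Xvec, hzx, hzx.symm]
  split_ifs <;> simp_all <;> ring

lemma Xvec_sq {d : ℕ} (i j : Fin d) (x z x₀ : Fin d → ℤ) (m : Fin d)
    (p : (Fin d → ℤ) → Fin d → ℝ) (hzx : z ≠ x) :
    Xvec i j x z (Xvec i j x z p) x₀ m =
      ((if x₀ = z then (1:ℝ) else 0) - (if x₀ = x then 1 else 0)) *
        (if i = j then 0 else
          2 * (if m = i then p x i - p z i else 0)
          + 2 * (if m = j then p x j - p z j else 0)) := by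
  have hj := Xvec_diff i j x z p hzx j
  have hi := Xvec_diff i j x z p hzx i
  calc Xvec i j x z (Xvec i j x z p) x₀ m
      = (if x₀ = z ∧ m = i then Xvec i j x z p z j - Xvec i j x z p x j else 0)
        - (if x₀ = x ∧ m = i then Xvec i j x z p z j - Xvec i j x z p x j else 0)
        - (if x₀ = z ∧ m = j then Xvec i j x z p z i - Xvec i j x z p x i else 0)
        + (if x₀ = x ∧ m = j then Xvec i j x z p z i - Xvec i j x z p x i else 0) := rfl
    _ = _ := by
        rw [hj, hi]
        clear hj hi
        simp only [ite_and]
        split_ifs <;> subst_vars <;> first | ring1 | simp_all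

lemma deriv_affine (a b : ℝ) : deriv (fun t : ℝ => a + t * b) 0 = b := by
  simpa using (((hasDerivAt_id (0:ℝ)).mul_const b).const_add a).deriv

lemma dirDeriv_eval {d : ℕ} (x₀ : Fin d → ℤ) (m : Fin d)
    (v p : (Fin d → ℤ) → Fin d → ℝ) :
    dirDeriv (fun q => q x₀ m) v p = v x₀ m := by
  unfold dirDeriv
  exact deriv_affine (p x₀ m) (v x₀ m)

lemma Xop_eval {d : ℕ} (i j : Fin d) (x z x₀ : Fin d → ℤ) (m : Fin d)
    (p : (Fin d → ℤ) → Fin d → ℝ) :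
    Xop i j x z (fun q => q x₀ m) p = Xvec i j x z p x₀ m :=
  dirDeriv_eval x₀ m _ p

lemma Xop_Xop_eval {d : ℕ} (i j : Fin d) (x z x₀ : Fin d → ℤ) (m : Fin d)
    (p : (Fin d → ℤ) → Fin d → ℝ) :
    Xop i j x z (Xop i j x z (fun q => q x₀ m)) p
      = Xvec i j x z (Xvec i j x z p) x₀ m := by
  have h1 : (Xop i j x z (fun q => q x₀ m)) = fun q => Xvec i j x z q x₀ m :=
    funext fun q => Xop_eval i j x z x₀ m q
  rw [Xop, h1]
  unfold dirDeriv
  have h2 : ∀ t : ℝ, Xvec i j x z (fun y k => p y k + t * Xvec i j x z p y k) x₀ m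
      = Xvec i j x z p x₀ m + t * Xvec i j x z (Xvec i j x z p) x₀ m := by
    intro t; rw [Xvec_lin]
  simp only [h2]
  exact deriv_affine _ _

lemma sum_ij {d : ℕ} (m : Fin d) (a : Fin d → ℝ) :
    ∑ i : Fin d, ∑ j : Fin d,
      (if i = j then (0:ℝ)
        else 2 * (if m = i then a i else 0) + 2 * (if m = j then a j else 0))
      = 4 * ((d:ℝ) - 1) * a m := by
  set f : Fin d → ℝ := fun t => if m = t then a t else 0 with hf
  have hS : ∑ t : Fin d, f t = a m := by simp [hf, Finset.sum_ite_eq]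
  have h1 : ∀ i j : Fin d,
      (if i = j then (0:ℝ)
        else 2 * (if m = i then a i else 0) + 2 * (if m = j then a j else 0))
      = (2 * f i + 2 * f j) - (if i = j then 2 * f i + 2 * f j else 0) := by
    intro i j; by_cases h : i = j
    · subst h; simp
    · simp [h, hf]
  simp only [h1]
  simp only [Finset.sum_sub_distrib, Finset.sum_add_distrib, Finset.sum_const,
    Finset.sum_ite_eq, Finset.mem_univ, if_true, Finset.card_univ, Fintype.card_fin,
    ← Finset.mul_sum, hS, nsmul_eq_mul]
  ring

lemma summand {d : ℕ} (p : (Fin d → ℤ) → Fin d → ℝ) (x₀ x : Fin d → ℤ) (m : Fin d) :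
    (∑ i : Fin d, ∑ j : Fin d, ∑ k : Fin d,
      Xop i j x (x + latE d k) (Xop i j x (x + latE d k) (fun q => q x₀ m)) p)
    = ∑ k : Fin d,
        ((if x₀ = x + latE d k then (1:ℝ) else 0) - (if x₀ = x then 1 else 0)) *
          (4 * ((d:ℝ) - 1) * (p x m - p (x + latE d k) m)) := by
  have hswap : (∑ i : Fin d, ∑ j : Fin d, ∑ k : Fin d,
      Xop i j x (x + latE d k) (Xop i j x (x + latE d k) (fun q => q x₀ m)) p)
      = ∑ k : Fin d, ∑ i : Fin d, ∑ j : Fin d,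
        Xop i j x (x + latE d k) (Xop i j x (x + latE d k) (fun q => q x₀ m)) p :=
    (Finset.sum_congr rfl fun i _ => Finset.sum_comm).trans Finset.sum_comm
  rw [hswap]
  refine Finset.sum_congr rfl fun k _ => ?_
  have hzx := add_latE_ne x k
  calc ∑ i : Fin d, ∑ j : Fin d,
        Xop i j x (x + latE d k) (Xop i j x (x + latE d k) (fun q => q x₀ m)) p
      = ∑ i : Fin d, ∑ j : Fin d,
          ((if x₀ = x + latE d k then (1:ℝ) else 0) - (if x₀ = x then 1 else 0)) *
            (if i = j then 0
              else 2 * (if m = i then p x i - p (x + latE d k) i else 0)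
                + 2 * (if m = j then p x j - p (x + latE d k) j else 0)) := by
        refine Finset.sum_congr rfl fun i _ => Finset.sum_congr rfl fun j _ => ?_
        rw [Xop_Xop_eval, Xvec_sq i j x (x + latE d k) x₀ m p hzx]
    _ = ((if x₀ = x + latE d k then (1:ℝ) else 0) - (if x₀ = x then 1 else 0)) *
          ∑ i : Fin d, ∑ j : Fin d,
            (if i = j then (0:ℝ)
              else 2 * (if m = i then p x i - p (x + latE d k) i else 0)
                + 2 * (if m = j then p x j - p (x + latE d k) j else 0)) := by
        simp_rw [← Finset.mul_sum]
    _ = _ := by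
        rw [sum_ij m (fun t => p x t - p (x + latE d k) t)]

/-- In `d ≥ 2`, the generator `S` applied to a single momentum coordinate
satisfies `S p_x = 2 Δ p_x`, componentwise. -/
theorem Sgen_momentum (d : ℕ) (hd : 2 ≤ d) (p : (Fin d → ℤ) → Fin d → ℝ)
    (x₀ : Fin d → ℤ) (m : Fin d) :
    Sgen (fun p => p x₀ m) p =
      2 * ∑ k : Fin d,
        (p (x₀ + latE d k) m + p (x₀ - latE d k) m - 2 * p x₀ m) := by
  classical
  have hd1 : (d : ℝ) - 1 ≠ 0 := by
    have h2 : (2 : ℝ) ≤ (d : ℝ) := by exact_mod_cast hd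
    intro h; linarith
  unfold Sgen
  set F : (Fin d → ℤ) → ℝ := fun x => ∑ k : Fin d,
      ((if x₀ = x + latE d k then (1:ℝ) else 0) - (if x₀ = x then 1 else 0)) *
        (4 * ((d:ℝ) - 1) * (p x m - p (x + latE d k) m)) with hF
  have hsum : ∀ x, (∑ i : Fin d, ∑ j : Fin d, ∑ k : Fin d,
      Xop i j x (x + latE d k) (Xop i j x (x + latE d k) (fun q => q x₀ m)) p) = F x :=
    fun x => summand p x₀ x m
  rw [tsum_congr hsum]
  have hx0notin : x₀ ∉ Finset.image (fun k => x₀ - latE d k) (Finset.univ : Finset (Fin d)) := by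
    simp only [Finset.mem_image, Finset.mem_univ, true_and, not_exists]
    intro k h
    have h0 : latE d k = 0 := sub_eq_self.mp h
    have := congrFun h0 k
    simp [latE] at this
  have hvan : ∀ x ∉ insert x₀ (Finset.image (fun k => x₀ - latE d k)
      (Finset.univ : Finset (Fin d))), F x = 0 := by
    intro x hx
    have hx0 : x ≠ x₀ := fun h => hx (h ▸ Finset.mem_insert_self _ _)
    have hx1 : ∀ k, x₀ - latE d k ≠ x := fun k h =>
      hx (Finset.mem_insert_of_mem (Finset.mem_image.2 ⟨k, Finset.mem_univ k, h⟩))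
    refine Finset.sum_eq_zero fun k _ => ?_
    have c1 : x₀ ≠ x + latE d k := by
      intro h
      exact hx1 k (by rw [h]; exact add_sub_cancel_right x (latE d k))
    have c2 : x₀ ≠ x := fun h => hx0 h.symm
    simp [c1, c2]
  rw [tsum_eq_sum hvan, Finset.sum_insert hx0notin,
    Finset.sum_image (fun k _ k' _ h => latE_inj (sub_right_injective h))]
  have hFx₀ : F x₀ = ∑ k : Fin d, 4 * ((d:ℝ) - 1) * (p (x₀ + latE d k) m - p x₀ m) := by
    refine Finset.sum_congr rfl fun k _ => ?_
    have c1 : x₀ ≠ x₀ + latE d k := fun h => add_latE_ne x₀ k h.symm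
    rw [if_neg c1, if_pos rfl]
    ring
  have hFsub : ∀ k, F (x₀ - latE d k) = 4 * ((d:ℝ) - 1) * (p (x₀ - latE d k) m - p x₀ m) := by
    intro k
    have hcanc : x₀ - latE d k + latE d k = x₀ := sub_add_cancel x₀ (latE d k)
    have hcond : ∀ k', (x₀ = x₀ - latE d k + latE d k') ↔ k = k' := by
      intro k'
      constructor
      · intro h
        have h2 : x₀ - latE d k + latE d k = x₀ - latE d k + latE d k' := by rw [hcanc]; exact h
        exact latE_inj (add_left_cancel h2)
      · intro h; subst h; rw [hcanc]
    have c2 : x₀ ≠ x₀ - latE d k := by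
      intro h
      have h0 : latE d k = 0 := sub_eq_self.mp h.symm
      have := congrFun h0 k
      simp [latE] at this
    calc F (x₀ - latE d k)
        = ∑ k' : Fin d, (if k = k'
            then 4 * ((d:ℝ) - 1) * (p (x₀ - latE d k) m - p x₀ m) else 0) := by
          refine Finset.sum_congr rfl fun k' _ => ?_
          by_cases h : k = k'
          · subst h
            rw [hcanc]
            simp only [eq_self_iff_true, if_true, if_neg c2]
            ring
          · have : ¬ (x₀ = x₀ - latE d k + latE d k') := fun hh => h ((hcond k').1 hh)
            simp [this, c2, h]
      _ = _ := by rw [Finset.sum_ite_eq]; simp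
  rw [hFx₀]
  simp only [hFsub]
  rw [← Finset.sum_add_distrib, Finset.mul_sum, Finset.mul_sum]
  refine Finset.sum_congr rfl fun k _ => ?_
  field_simp
  ring
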